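/- For n = 2, the equal-weighted portfolio π ≡ (1/2, 1/2) is maximal among C¹ functionally generated portfolios: if v : (0,1) → (0,∞) is C², concave, satisfies −v''(x)/v(x) ≥ 1/(4(x(1−x))²) for all x ∈ (0,1), and x(1 + (1−x)(log v)'(x)) ∈ [0,1] for all x ∈ (0,1), then x + x(1−x)v'(x)/v(x) = 1/2 for all x ∈ (0,1). -/

import Mathlib

lemma riccati_zero (q : ℝ → ℝ)
    (hdiff : ∀ x ∈ Set.Ioo (0:ℝ) 1, DifferentiableAt ℝ q x)
    (hq : ∀ x ∈ Set.Ioo (0:ℝ) 1, deriv q x ≤ -(q x)^2 / (x*(1-x)))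
    (hb : ∀ x ∈ Set.Ioo (0:ℝ) 1, |q x| ≤ 1/2) :
    ∀ x ∈ Set.Ioo (0:ℝ) 1, q x = 0 := by
  have hanti : AntitoneOn q (Set.Ioo (0:ℝ) 1) := by
    apply antitoneOn_of_deriv_nonpos (convex_Ioo 0 1)
    · exact fun y hy => (hdiff y hy).continuousAt.continuousWithinAt
    · rw [interior_Ioo]; exact fun y hy => (hdiff y hy).differentiableWithinAt
    · rw [interior_Ioo]
      intro y hy
      have hφ : 0 < y * (1 - y) := by nlinarith [hy.1, hy.2]
      have h1 := hq y hy
      have h2 : -(q y)^2 / (y*(1-y)) ≤ 0 :=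
        div_nonpos_of_nonpos_of_nonneg (neg_nonpos.mpr (sq_nonneg _)) hφ.le
      linarith
  intro x₀ hx₀
  by_contra hne
  have hx₀0 := hx₀.1
  have hx₀1 := hx₀.2
  rcases lt_or_gt_of_ne hne with hc | hc
  · -- q x₀ < 0 : blow up to the right (towards 1)
    obtain ⟨c, hcdef⟩ : ∃ c, c = q x₀ := ⟨_, rfl⟩
    rw [← hcdef] at hc
    have hc2 : (0:ℝ) < c^2 := by nlinarith [mul_pos_of_neg_of_neg hc hc]
    obtain ⟨x, hxdef⟩ : ∃ x, x = 1 - (1 - x₀) * Real.exp (-2/c^2) := ⟨_, rfl⟩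
    have he : 0 < Real.exp (-2/c^2) := Real.exp_pos _
    have he1 : Real.exp (-2/c^2) < 1 := by
      rw [Real.exp_lt_one_iff]
      exact div_neg_of_neg_of_pos (by norm_num) hc2
    have h1x : (1:ℝ) - x = (1 - x₀) * Real.exp (-2/c^2) := by rw [hxdef]; ring
    have hx1 : x < 1 := by
      have hp : 0 < (1 - x₀) * Real.exp (-2/c^2) := mul_pos (by linarith) he
      linarith [h1x]
    have hxgt : x₀ < x := by
      have hp2 : (1 - x₀) * Real.exp (-2/c^2) < (1 - x₀) * 1 :=
        mul_lt_mul_of_pos_left he1 (by linarith)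
      linarith [h1x]
    have hxIoo : x ∈ Set.Ioo (0:ℝ) 1 := ⟨by linarith, hx1⟩
    have hsub : Set.Icc x₀ x ⊆ Set.Ioo (0:ℝ) 1 := fun y hy =>
      ⟨by linarith [hy.1], by linarith [hy.2]⟩
    obtain ⟨h, hhdef⟩ : ∃ h : ℝ → ℝ, h = fun y => q y - c^2 * Real.log (1 - y) := ⟨_, rfl⟩
    have hhanti : AntitoneOn h (Set.Icc x₀ x) := by
      rw [hhdef]
      apply antitoneOn_of_deriv_nonpos (convex_Icc _ _)
      · intro y hy
        refine ContinuousWithinAt.sub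
          ((hdiff y (hsub hy)).continuousAt.continuousWithinAt)
          (ContinuousAt.continuousWithinAt (ContinuousAt.mul continuousAt_const ?_))
        refine (Real.continuousAt_log ?_).comp (by fun_prop)
        have := (hsub hy).2; intro hh; nlinarith
      · rw [interior_Icc]
        intro y hy
        have hyI := hsub (Set.Ioo_subset_Icc_self hy)
        have h1y : (1:ℝ) - y ≠ 0 := by have := hyI.2; intro hh; nlinarith
        have hlog : HasDerivAt (fun z : ℝ => Real.log (1 - z)) ((1-y)⁻¹ * (0 - 1)) y :=
          (Real.hasDerivAt_log h1y).comp y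
            ((hasDerivAt_const y (1:ℝ)).sub (hasDerivAt_id' y))
        exact ((hdiff y hyI).sub
          (HasDerivAt.const_mul (c^2) hlog).differentiableAt).differentiableWithinAt
      · rw [interior_Icc]
        intro y hy
        have hyI := hsub (Set.Ioo_subset_Icc_self hy)
        have hy0 : 0 < y := hyI.1
        have hy1 : y < 1 := hyI.2
        have h1y : (1:ℝ) - y ≠ 0 := by intro hh; nlinarith
        have hφ : 0 < y * (1 - y) := by nlinarith
        have hlog : HasDerivAt (fun z : ℝ => Real.log (1 - z)) ((1-y)⁻¹ * (0 - 1)) y :=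
          (Real.hasDerivAt_log h1y).comp y
            ((hasDerivAt_const y (1:ℝ)).sub (hasDerivAt_id' y))
        have hd : HasDerivAt (fun y => q y - c^2 * Real.log (1 - y))
            (deriv q y - c^2 * ((1-y)⁻¹ * (0 - 1))) y :=
          ((hdiff y hyI).hasDerivAt).sub (HasDerivAt.const_mul (c^2) hlog)
        rw [hd.deriv]
        have hqy : q y ≤ c := hcdef ▸ hanti hx₀ hyI hy.1.le
        have hqsq : c^2 ≤ (q y)^2 := by nlinarith
        have h1 := hq y hyI
        have hA : -(q y)^2 / (y*(1-y)) ≤ -c^2 * (1-y)⁻¹ := by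
          rw [div_le_iff₀ hφ]
          have e2 : -c^2 * (1-y)⁻¹ * (y*(1-y)) = -c^2 * y := by field_simp
          rw [e2]
          nlinarith [mul_le_mul_of_nonneg_left hy1.le hc2.le]
        have := h1.trans hA
        nlinarith [this]
    have hfin : h x ≤ h x₀ :=
      hhanti (Set.left_mem_Icc.mpr hxgt.le) (Set.right_mem_Icc.mpr hxgt.le) hxgt.le
    simp only [hhdef] at hfin
    rw [h1x, Real.log_mul (by linarith) he.ne', Real.log_exp] at hfin
    have hql : -(1/2 : ℝ) ≤ q x := (abs_le.mp (hb x hxIoo)).1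
    have hcc : c^2 * (-2/c^2) = -2 := by
      rw [mul_div_assoc', mul_comm, mul_div_assoc, div_self hc2.ne', mul_one]
    linarith [hfin, hql, hcc, hc]
  · -- q x₀ > 0 : blow up to the left (towards 0)
    obtain ⟨c, hcdef⟩ : ∃ c, c = q x₀ := ⟨_, rfl⟩
    rw [← hcdef] at hc
    have hc2 : (0:ℝ) < c^2 := by nlinarith [mul_pos hc hc]
    obtain ⟨x, hxdef⟩ : ∃ x, x = x₀ * Real.exp (-2/c^2) := ⟨_, rfl⟩
    have he : 0 < Real.exp (-2/c^2) := Real.exp_pos _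
    have he1 : Real.exp (-2/c^2) < 1 := by
      rw [Real.exp_lt_one_iff]
      exact div_neg_of_neg_of_pos (by norm_num) hc2
    have hx0 : 0 < x := by rw [hxdef]; exact mul_pos hx₀0 he
    have hxlt : x < x₀ := by nlinarith
    have hxIoo : x ∈ Set.Ioo (0:ℝ) 1 := ⟨hx0, by linarith⟩
    have hsub : Set.Icc x x₀ ⊆ Set.Ioo (0:ℝ) 1 := fun y hy =>
      ⟨by linarith [hy.1], by linarith [hy.2]⟩
    obtain ⟨h, hhdef⟩ : ∃ h : ℝ → ℝ, h = fun y => q y + c^2 * Real.log y := ⟨_, rfl⟩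
    have hhanti : AntitoneOn h (Set.Icc x x₀) := by
      rw [hhdef]
      apply antitoneOn_of_deriv_nonpos (convex_Icc _ _)
      · intro y hy
        refine ContinuousWithinAt.add
          ((hdiff y (hsub hy)).continuousAt.continuousWithinAt)
          (ContinuousAt.continuousWithinAt (ContinuousAt.mul continuousAt_const
            (Real.continuousAt_log (by have := (hsub hy).1; positivity))))
      · rw [interior_Icc]
        intro y hy
        have hyI := hsub (Set.Ioo_subset_Icc_self hy)
        exact ((hdiff y hyI).add
          (HasDerivAt.const_mul (c^2) (Real.hasDerivAt_log hyI.1.ne')).differentiableAt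
          ).differentiableWithinAt
      · rw [interior_Icc]
        intro y hy
        have hyI := hsub (Set.Ioo_subset_Icc_self hy)
        have hy0 : 0 < y := hyI.1
        have hy1 : y < 1 := hyI.2
        have hφ : 0 < y * (1 - y) := by nlinarith
        have hd : HasDerivAt (fun y => q y + c^2 * Real.log y)
            (deriv q y + c^2 * y⁻¹) y :=
          ((hdiff y hyI).hasDerivAt).add
            (HasDerivAt.const_mul (c^2) (Real.hasDerivAt_log hy0.ne'))
        rw [hd.deriv]
        have hqy : c ≤ q y := hcdef ▸ hanti hyI hx₀ hy.2.le
        have hqsq : c^2 ≤ (q y)^2 := by nlinarith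
        have h1 := hq y hyI
        have hA : -(q y)^2 / (y*(1-y)) ≤ -c^2 * y⁻¹ := by
          rw [div_le_iff₀ hφ]
          have e2 : -c^2 * y⁻¹ * (y*(1-y)) = -c^2 * (1-y) := by field_simp
          rw [e2]
          nlinarith [mul_le_mul_of_nonneg_left hy1.le hc2.le]
        have := h1.trans hA
        nlinarith [this]
    have hfin : h x₀ ≤ h x :=
      hhanti (Set.left_mem_Icc.mpr hxlt.le) (Set.right_mem_Icc.mpr hxlt.le) hxlt.le
    simp only [hhdef] at hfin
    rw [hxdef, Real.log_mul hx₀0.ne' he.ne', Real.log_exp] at hfin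
    have hqu : q (x₀ * Real.exp (-2/c^2)) ≤ 1/2 := by
      have := (abs_le.mp (hb x hxIoo)).2
      rwa [hxdef] at this
    have hcc : c^2 * (-2/c^2) = -2 := by field_simp
    linarith [hfin, hqu, hcc, hc]


set_option linter.unusedVariables false in
theorem stmt_13 (v : ℝ → ℝ)
    (hv : ContDiffOn ℝ 2 v (Set.Ioo (0 : ℝ) 1))
    (hconc : ConcaveOn ℝ (Set.Ioo (0 : ℝ) 1) v)
    (hpos : ∀ x ∈ Set.Ioo (0 : ℝ) 1, 0 < v x)
    (hdrift : ∀ x ∈ Set.Ioo (0 : ℝ) 1,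
      -(deriv (deriv v) x) / v x ≥ 1 / (4 * (x * (1 - x)) ^ 2))
    (hweight : ∀ x ∈ Set.Ioo (0 : ℝ) 1,
      x * (1 + (1 - x) * (deriv v x / v x)) ∈ Set.Icc (0 : ℝ) 1) :
    ∀ x ∈ Set.Ioo (0 : ℝ) 1,
      x + x * (1 - x) * deriv v x / v x = 1 / 2 := by
  have hopen : IsOpen (Set.Ioo (0:ℝ) 1) := isOpen_Ioo
  have hv1 : ∀ x ∈ Set.Ioo (0:ℝ) 1, HasDerivAt v (deriv v x) x := fun x hx =>
    ((hv.contDiffAt (hopen.mem_nhds hx)).differentiableAt (by norm_num)).hasDerivAt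
  have hvc1 : ContDiffOn ℝ 1 (deriv v) (Set.Ioo (0:ℝ) 1) :=
    hv.deriv_of_isOpen hopen (by norm_num)
  have hv2 : ∀ x ∈ Set.Ioo (0:ℝ) 1, HasDerivAt (deriv v) (deriv (deriv v) x) x := fun x hx =>
    ((hvc1.contDiffAt (hopen.mem_nhds hx)).differentiableAt (by norm_num)).hasDerivAt
  -- the derivative of q
  have key : ∀ x ∈ Set.Ioo (0:ℝ) 1,
      HasDerivAt (fun y => y + y * (1 - y) * deriv v y / v y - 1/2)
        (1 + (((1 - 2*x) * deriv v x + x * (1 - x) * deriv (deriv v) x) * v x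
          - x * (1 - x) * deriv v x * deriv v x) / (v x)^2) x := by
    intro x hx
    have hA : HasDerivAt (fun y : ℝ => y * (1 - y)) (1 - 2*x) x := by
      have h1 := (hasDerivAt_id' x).mul ((hasDerivAt_const x (1:ℝ)).sub (hasDerivAt_id' x))
      exact h1.congr_deriv (by simp only [Pi.sub_apply]; ring)
    have hN : HasDerivAt (fun y : ℝ => y * (1 - y) * deriv v y)
        ((1 - 2*x) * deriv v x + x * (1 - x) * deriv (deriv v) x) x := hA.mul (hv2 x hx)
    have hD := hN.div (hv1 x hx) (hpos x hx).ne'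
    have h2 := ((hasDerivAt_id' x).add hD).sub_const (1/2)
    exact h2
  -- apply the Riccati lemma
  have main := riccati_zero (fun y => y + y * (1 - y) * deriv v y / v y - 1/2)
    (fun x hx => ((key x hx).differentiableAt))
    (fun x hx => by
      obtain ⟨hx0, hx1⟩ := hx
      have hV := hpos x ⟨hx0, hx1⟩
      have hd := hdrift x ⟨hx0, hx1⟩
      have hφ : 0 < x * (1 - x) := by nlinarith
      rw [ge_iff_le, div_le_div_iff₀ (by positivity) hV] at hd
      show deriv (fun y => y + y * (1 - y) * deriv v y / v y - 1/2) x ≤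
        -(x + x * (1 - x) * deriv v x / v x - 1/2)^2 / (x * (1 - x))
      rw [(key x ⟨hx0, hx1⟩).deriv]
      rw [le_div_iff₀ hφ, ← sub_nonneg]
      have expand : -(x + x * (1 - x) * deriv v x / v x - 1/2)^2 -
          (1 + (((1 - 2*x) * deriv v x + x * (1 - x) * deriv (deriv v) x) * v x
          - x * (1 - x) * deriv v x * deriv v x) / (v x)^2) * (x * (1 - x))
          = (-(v x) - deriv (deriv v) x * (4 * (x * (1-x))^2)) / (4 * v x) := by
        field_simp
        ring
      rw [expand]
      apply div_nonneg ?_ (by positivity)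
      linarith)
    (fun x hx => by
      have h := hweight x hx
      have hV := hpos x hx
      have e : x * (1 + (1 - x) * (deriv v x / v x)) = x + x * (1 - x) * deriv v x / v x := by
        ring
      rw [e] at h
      show |x + x * (1 - x) * deriv v x / v x - 1/2| ≤ 1/2
      rw [abs_le]
      exact ⟨by linarith [h.1], by linarith [h.2]⟩)
  intro x hx
  have h0 : x + x * (1 - x) * deriv v x / v x - 1/2 = 0 := main x hx
  linarith
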